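/- arXiv:2603.16172 — 2 statements merged into one kernel-verified Lean document; each statement's English description precedes it below -/
import Mathlib

section
/- For every real number S and every α ∈ (0,1), the principal value integral PV ∫_ℝ e^{irS}/(r|r|^α) dr satisfies |PV ∫_ℝ e^{irS}/(r|r|^α) dr| ≤ C(α)|S|^α, where C(α) = 6/(1-α). Equivalently, |2 PV ∫_0^∞ sin(rS)/r^{1+α} dr| ≤ 6|S|^α/(1-α). -/
open Filter MeasureTheory Set Real
open scoped Interval

section Aux

variable {α S : ℝ}

private lemma aux_small (hα0 : 0 < α) (hα1 : α < 1) (hS : S ≠ 0) :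
    |∫ r in (0:ℝ)..|S|⁻¹, Real.sin (r * S) / r ^ (1 + α)| ≤ |S| ^ α / (1 - α) := by
  have hs : 0 < |S| := abs_pos.2 hS
  have ha : 0 < |S|⁻¹ := inv_pos.2 hs
  -- dominating function
  set g : ℝ → ℝ := fun r => |S| * r ^ (-α) with hg
  have hgint : IntervalIntegrable g volume 0 |S|⁻¹ :=
    (intervalIntegral.intervalIntegrable_rpow' (by linarith)).const_mul _
  have hbound : ∀ᵐ t ∂(volume.restrict (Ι (0:ℝ) |S|⁻¹)),
      ‖Real.sin (t * S) / t ^ (1 + α)‖ ≤ g t := by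
    rw [Set.uIoc_of_le ha.le]
    refine (ae_restrict_iff' measurableSet_Ioc).2 (Filter.Eventually.of_forall ?_)
    intro t ht
    have ht0 : 0 < t := ht.1
    have h1 : t ^ (1 + α) = t * t ^ α := by
      rw [Real.rpow_add ht0, Real.rpow_one]
    have h2 : |Real.sin (t * S)| ≤ t * |S| := by
      calc |Real.sin (t * S)| ≤ |t * S| := Real.abs_sin_le_abs
        _ = t * |S| := by rw [abs_mul, abs_of_pos ht0]
    have hpow : 0 < t ^ α := Real.rpow_pos_of_pos ht0 α
    rw [Real.norm_eq_abs, abs_div, abs_of_pos (by rw [h1]; positivity : 0 < t ^ (1+α)), h1]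
    rw [div_le_iff₀ (by positivity)]
    calc |Real.sin (t * S)| ≤ t * |S| := h2
      _ = |S| * t ^ (-α) * (t * t ^ α) := by
          rw [Real.rpow_neg ht0.le]
          field_simp
  calc |∫ r in (0:ℝ)..|S|⁻¹, Real.sin (r * S) / r ^ (1 + α)|
      ≤ |∫ r in (0:ℝ)..|S|⁻¹, g r| :=
        intervalIntegral.norm_integral_le_abs_of_norm_le hbound hgint
    _ = |S| ^ α / (1 - α) := by
        rw [hg]
        rw [intervalIntegral.integral_const_mul,
          integral_rpow (Or.inl (by linarith : (-1:ℝ) < -α))]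
        rw [Real.zero_rpow (by linarith : -α + 1 ≠ 0), sub_zero,
          Real.inv_rpow hs.le, ← Real.rpow_neg hs.le]
        rw [abs_of_nonneg (mul_nonneg hs.le (div_nonneg
          (Real.rpow_nonneg (abs_nonneg S) _) (by linarith)))]
        rw [show (-(-α + 1)) = α - 1 by ring, ← mul_div_assoc]
        nth_rewrite 1 [← Real.rpow_one |S|]
        rw [← Real.rpow_add hs, show (1 + (α - 1)) = α by ring,
          show -α + 1 = 1 - α by ring]

private lemma aux_tail (hα0 : 0 < α) (hS : S ≠ 0) {R : ℝ} (hR : |S|⁻¹ ≤ R) :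
    |∫ r in |S|⁻¹..R, Real.sin (r * S) / r ^ (1 + α)| ≤
      2 * |S| ^ α + R ^ (-(1 + α)) / |S| := by
  have hs : 0 < |S| := abs_pos.2 hS
  have ha : 0 < |S|⁻¹ := inv_pos.2 hs
  set a : ℝ := |S|⁻¹ with hadef
  have hx0 : ∀ x ∈ [[a, R]], 0 < x := by
    rw [Set.uIcc_of_le hR]
    exact fun x hx => lt_of_lt_of_le ha hx.1
  set u : ℝ → ℝ := fun x => x ^ (-(1 + α)) with hu_def
  set v : ℝ → ℝ := fun x => -Real.cos (x * S) / S with hv_def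
  have hu : ∀ x ∈ [[a, R]], HasDerivAt u ((-(1 + α)) * x ^ (-(1 + α) - 1)) x :=
    fun x hx => Real.hasDerivAt_rpow_const (Or.inl (hx0 x hx).ne')
  have hv : ∀ x : ℝ, HasDerivAt v (Real.sin (x * S)) x := by
    intro x
    have h1 : HasDerivAt (fun y : ℝ => y * S) S x := hasDerivAt_mul_const S
    have h2 := (h1.cos).neg.div_const S
    rw [show Real.sin (x * S) = -(-Real.sin (x * S) * S) / S by field_simp]
    exact h2
  have hu' : IntervalIntegrable (fun x => (-(1 + α)) * x ^ (-(1 + α) - 1)) volume a R := by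
    apply ContinuousOn.intervalIntegrable
    exact continuousOn_const.mul (fun x hx =>
      (Real.continuousAt_rpow_const x _ (Or.inl (hx0 x hx).ne')).continuousWithinAt)
  have hv' : IntervalIntegrable (fun x => Real.sin (x * S)) volume a R :=
    (Real.continuous_sin.comp (continuous_id.mul continuous_const)).intervalIntegrable a R
  have heq : Set.EqOn (fun r => Real.sin (r * S) / r ^ (1 + α))
      (fun x => u x * Real.sin (x * S)) [[a, R]] := by
    intro x hx
    simp only [hu_def]
    rw [Real.rpow_neg (hx0 x hx).le, div_eq_mul_inv, mul_comm]
  rw [intervalIntegral.integral_congr heq,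
    intervalIntegral.integral_mul_deriv_eq_deriv_mul hu (fun x _ => hv x) hu' hv']
  have hRpos : 0 < R := lt_of_lt_of_le ha hR
  -- bound on v
  have hvb : ∀ x : ℝ, |v x| ≤ 1 / |S| := by
    intro x
    rw [hv_def]
    simp only
    rw [abs_div, abs_neg]
    gcongr
    exact Real.abs_cos_le_one _
  have hub : ∀ x : ℝ, 0 < x → |u x| = x ^ (-(1 + α)) := by
    intro x hx
    rw [hu_def]
    exact abs_of_nonneg (Real.rpow_nonneg hx.le _)
  have hainv : a ^ (-(1 + α)) = |S| ^ (1 + α) := by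
    rw [hadef, Real.inv_rpow hs.le, ← Real.rpow_neg hs.le, neg_neg]
  have hsa : |S| ^ (1 + α) / |S| = |S| ^ α := by
    nth_rewrite 2 [← Real.rpow_one |S|]
    rw [← Real.rpow_sub hs]
    ring_nf
  have b1 : |u R * v R| ≤ R ^ (-(1 + α)) / |S| := by
    rw [abs_mul, hub R hRpos]
    calc R ^ (-(1 + α)) * |v R| ≤ R ^ (-(1 + α)) * (1 / |S|) :=
          mul_le_mul_of_nonneg_left (hvb R) (Real.rpow_nonneg hRpos.le _)
      _ = R ^ (-(1 + α)) / |S| := by ring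
  have b2 : |u a * v a| ≤ |S| ^ α := by
    rw [abs_mul, hub a ha, hainv]
    calc |S| ^ (1 + α) * |v a| ≤ |S| ^ (1 + α) * (1 / |S|) :=
          mul_le_mul_of_nonneg_left (hvb a) (Real.rpow_nonneg hs.le _)
      _ = |S| ^ α := by rw [← hsa]; ring
  have b3 : |∫ x in a..R, (-(1 + α)) * x ^ (-(1 + α) - 1) * v x| ≤ |S| ^ α := by
    set G : ℝ → ℝ := fun x => ((1 + α) / |S|) * x ^ (-(1 + α) - 1) with hG
    have hGint : IntervalIntegrable G volume a R := by
      apply ContinuousOn.intervalIntegrable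
      exact continuousOn_const.mul (fun x hx =>
        (Real.continuousAt_rpow_const x _ (Or.inl (hx0 x hx).ne')).continuousWithinAt)
    have hGb : ∀ᵐ t ∂(volume.restrict (Ι a R)),
        ‖(-(1 + α)) * t ^ (-(1 + α) - 1) * v t‖ ≤ G t := by
      rw [Set.uIoc_of_le hR]
      refine (ae_restrict_iff' measurableSet_Ioc).2 (Filter.Eventually.of_forall ?_)
      intro t ht
      have ht0 : 0 < t := lt_of_lt_of_le ha ht.1.le
      have hpow : 0 ≤ t ^ (-(1 + α) - 1) := Real.rpow_nonneg ht0.le _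
      rw [Real.norm_eq_abs, abs_mul, abs_mul, abs_neg, abs_of_pos (by linarith : (0:ℝ) < 1 + α),
        abs_of_nonneg hpow, hG]
      calc (1 + α) * t ^ (-(1 + α) - 1) * |v t|
          ≤ (1 + α) * t ^ (-(1 + α) - 1) * (1 / |S|) :=
            mul_le_mul_of_nonneg_left (hvb t) (by positivity)
        _ = (1 + α) / |S| * t ^ (-(1 + α) - 1) := by ring
    have hne : [[a, R]] ⊆ {(0:ℝ)}ᶜ := fun x hx => (hx0 x hx).ne'
    have h0 : (0:ℝ) ∉ [[a, R]] := fun h => (hx0 0 h).false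
    have hint : ∫ t in a..R, G t = (a ^ (-(1 + α)) - R ^ (-(1 + α))) / |S| := by
      rw [hG, intervalIntegral.integral_const_mul,
        integral_rpow (Or.inr ⟨by intro h; nlinarith [h] , h0⟩)]
      rw [show -(1 + α) - 1 + 1 = -(1 + α) by ring]
      have hne1 : -(1 + α) ≠ 0 := by intro h; nlinarith
      rw [div_mul_div_comm, div_eq_div_iff (mul_ne_zero hs.ne' hne1) hs.ne']
      ring
    have hmono : R ^ (-(1 + α)) ≤ a ^ (-(1 + α)) :=
      Real.rpow_le_rpow_of_nonpos ha hR (by linarith)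
    have hRn : 0 ≤ R ^ (-(1 + α)) := Real.rpow_nonneg hRpos.le _
    calc |∫ x in a..R, (-(1 + α)) * x ^ (-(1 + α) - 1) * v x|
        ≤ |∫ t in a..R, G t| := intervalIntegral.norm_integral_le_abs_of_norm_le hGb hGint
      _ ≤ |S| ^ α := by
          rw [hint, abs_of_nonneg (div_nonneg (by linarith) hs.le), ← hsa, ← hainv]
          gcongr
          linarith
  calc |u R * v R - u a * v a - ∫ x in a..R, (-(1 + α)) * x ^ (-(1 + α) - 1) * v x|
      ≤ |u R * v R| + |u a * v a| + |∫ x in a..R, (-(1 + α)) * x ^ (-(1 + α) - 1) * v x| := by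
        exact (abs_sub _ _).trans (by gcongr; exact abs_sub _ _)
    _ ≤ 2 * |S| ^ α + R ^ (-(1 + α)) / |S| := by linarith

private lemma aux_int1 (hα1 : α < 1) (hS : S ≠ 0) :
    IntervalIntegrable (fun r => Real.sin (r * S) / r ^ (1 + α)) volume 0 |S|⁻¹ := by
  have hs : 0 < |S| := abs_pos.2 hS
  have ha : 0 < |S|⁻¹ := inv_pos.2 hs
  have hgint : IntervalIntegrable (fun r : ℝ => |S| * r ^ (-α)) volume 0 |S|⁻¹ :=
    (intervalIntegral.intervalIntegrable_rpow' (by linarith)).const_mul _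
  refine hgint.mono_fun ?_ ?_
  · apply Measurable.aestronglyMeasurable
    fun_prop
  · rw [Set.uIoc_of_le ha.le]
    refine (ae_restrict_iff' measurableSet_Ioc).2 (Filter.Eventually.of_forall ?_)
    intro t ht
    have ht0 : 0 < t := ht.1
    have h1 : t ^ (1 + α) = t * t ^ α := by
      rw [Real.rpow_add ht0, Real.rpow_one]
    have hpow : 0 < t ^ α := Real.rpow_pos_of_pos ht0 α
    show ‖Real.sin (t * S) / t ^ (1 + α)‖ ≤ ‖|S| * t ^ (-α)‖
    rw [Real.norm_eq_abs, Real.norm_eq_abs, abs_div,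
      abs_of_pos (by rw [h1]; positivity : 0 < t ^ (1 + α)), h1,
      abs_of_nonneg (mul_nonneg hs.le (Real.rpow_nonneg ht0.le _))]
    rw [div_le_iff₀ (by positivity)]
    calc |Real.sin (t * S)| ≤ |t * S| := Real.abs_sin_le_abs
      _ = t * |S| := by rw [abs_mul, abs_of_pos ht0]
      _ = |S| * t ^ (-α) * (t * t ^ α) := by
          rw [Real.rpow_neg ht0.le]
          field_simp

private lemma aux_int2 (hα0 : 0 < α) (hS : S ≠ 0) {R : ℝ} (hR : |S|⁻¹ ≤ R) :
    IntervalIntegrable (fun r => Real.sin (r * S) / r ^ (1 + α)) volume |S|⁻¹ R := by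
  have hs : 0 < |S| := abs_pos.2 hS
  have ha : 0 < |S|⁻¹ := inv_pos.2 hs
  have hx0 : ∀ x ∈ [[|S|⁻¹, R]], 0 < x := by
    rw [Set.uIcc_of_le hR]
    exact fun x hx => lt_of_lt_of_le ha hx.1
  apply ContinuousOn.intervalIntegrable
  apply ContinuousOn.div
  · exact (Real.continuous_sin.comp (continuous_id.mul continuous_const)).continuousOn
  · exact fun x hx =>
      (Real.continuousAt_rpow_const x _ (Or.inl (hx0 x hx).ne')).continuousWithinAt
  · exact fun x hx => (Real.rpow_pos_of_pos (hx0 x hx) _).ne'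

end Aux

/-- Principal value bound: if the PV integral
`PV ∫_ℝ e^{irS}/(r|r|^α) dr = 2 lim_{R→∞} ∫_0^R sin(rS)/r^{1+α} dr` exists with value `2L`,
then `|2L| ≤ 6|S|^α/(1-α)`. -/
theorem stmt0 (α S L : ℝ) (hα : α ∈ Set.Ioo (0:ℝ) 1)
    (hL : Tendsto (fun R : ℝ => ∫ r in Set.Ioc (0:ℝ) R, Real.sin (r * S) / r ^ (1 + α))
      atTop (nhds L)) :
    |2 * L| ≤ 6 * |S| ^ α / (1 - α) := by
  obtain ⟨hα0, hα1⟩ := hα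
  have h1α : 0 < 1 - α := by linarith
  rcases eq_or_ne S 0 with hS | hS
  · subst hS
    have h0 : Tendsto (fun R : ℝ => ∫ r in Set.Ioc (0:ℝ) R,
        Real.sin (r * 0) / r ^ (1 + α)) atTop (nhds 0) := by
      have : (fun R : ℝ => ∫ r in Set.Ioc (0:ℝ) R, Real.sin (r * 0) / r ^ (1 + α))
          = fun _ => (0:ℝ) := by
        funext R
        simp
      rw [this]
      exact tendsto_const_nhds
    have hL0 : L = 0 := tendsto_nhds_unique hL h0
    rw [hL0, mul_zero, abs_zero]
    positivity
  · have hs : 0 < |S| := abs_pos.2 hS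
    have ha : 0 < |S|⁻¹ := inv_pos.2 hs
    have key : ∀ᶠ R in atTop, |∫ r in Set.Ioc (0:ℝ) R, Real.sin (r * S) / r ^ (1 + α)|
        ≤ (|S| ^ α / (1 - α) + 2 * |S| ^ α) + R ^ (-(1 + α)) / |S| := by
      filter_upwards [eventually_ge_atTop |S|⁻¹] with R hR
      have hR0 : (0:ℝ) ≤ R := le_trans ha.le hR
      rw [← intervalIntegral.integral_of_le hR0,
        ← intervalIntegral.integral_add_adjacent_intervals (aux_int1 hα1 hS)
          (aux_int2 hα0 hS hR)]
      calc |(∫ r in (0:ℝ)..|S|⁻¹, Real.sin (r * S) / r ^ (1 + α)) +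
            ∫ r in |S|⁻¹..R, Real.sin (r * S) / r ^ (1 + α)|
          ≤ |∫ r in (0:ℝ)..|S|⁻¹, Real.sin (r * S) / r ^ (1 + α)| +
            |∫ r in |S|⁻¹..R, Real.sin (r * S) / r ^ (1 + α)| := abs_add_le _ _
        _ ≤ |S| ^ α / (1 - α) + (2 * |S| ^ α + R ^ (-(1 + α)) / |S|) :=
            add_le_add (aux_small hα0 hα1 hS) (aux_tail hα0 hS hR)
        _ = (|S| ^ α / (1 - α) + 2 * |S| ^ α) + R ^ (-(1 + α)) / |S| := by ring
    have hlim2 : Tendsto (fun R : ℝ => (|S| ^ α / (1 - α) + 2 * |S| ^ α) + R ^ (-(1 + α)) / |S|)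
        atTop (nhds ((|S| ^ α / (1 - α) + 2 * |S| ^ α) + 0 / |S|)) :=
      tendsto_const_nhds.add ((tendsto_rpow_neg_atTop (by linarith)).div_const _)
    have hLb : |L| ≤ (|S| ^ α / (1 - α) + 2 * |S| ^ α) + 0 / |S| :=
      le_of_tendsto_of_tendsto hL.abs hlim2 key
    rw [zero_div, add_zero] at hLb
    have hsα : 0 < |S| ^ α := Real.rpow_pos_of_pos hs α
    have h2 : |L| * (1 - α) ≤ |S| ^ α + 2 * |S| ^ α * (1 - α) := by
      have h3 := mul_le_mul_of_nonneg_right hLb h1α.le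
      rwa [add_mul, div_mul_cancel₀ _ h1α.ne'] at h3
    rw [abs_mul, abs_two, le_div_iff₀ h1α]
    nlinarith [h2, hsα, hα0]
end

section
/- Let α ∈ [0,1), let M > 0, K > 0, and let f : ℝ² → ℝ be bounded measurable with 0 ≤ f ≤ M₀ := ‖f‖_{L∞}, ‖f‖_{L¹} ≤ K, attaining its maximum M = f(x*) > 0 at x*. Then the nonnegative integral D₃ = ∫_{ℝ²} (f(x*) - f(y)) / [|x*-y|² + (f(x*)-f(y))²]^{(3+α)/2} dy satisfies D₃ ≥ (π/2) · M^{(3+α)/2} / [1 + 2K/π + 4M₀³]^{(3+α)/2}. -/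
open Real MeasureTheory

/-- Lower bound on the dissipation integral `D₃` at the maximum point: for `0 ≤ f ≤ M₀`,
`‖f‖_{L¹} ≤ K` and maximum `M = f(x*) > 0`,
`∫ (f(x*)-f(y))/[|x*-y|² + (f(x*)-f(y))²]^{(3+α)/2} dy
  ≥ (π/2) M^{(3+α)/2} / [1 + 2K/π + 4M₀³]^{(3+α)/2}`. -/
theorem stmt13 (α : ℝ) (hα : α ∈ Set.Ico (0:ℝ) 1)
    (f : EuclideanSpace ℝ (Fin 2) → ℝ) (xstar : EuclideanSpace ℝ (Fin 2))
    (K M M₀ : ℝ) (hK : 0 < K) (hM₀ : 0 < M₀)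
    (hmeas : Measurable f) (hnonneg : ∀ y, 0 ≤ f y) (hbdd : ∀ y, f y ≤ M₀)
    (hmax : ∀ y, f y ≤ f xstar) (hM : M = f xstar) (hMpos : 0 < M)
    (hint : Integrable f) (hL1 : ∫ y, f y ≤ K) :
    ENNReal.ofReal ((π / 2) * M ^ ((3 + α) / 2) / (1 + 2 * K / π + 4 * M₀ ^ 3) ^ ((3 + α) / 2))
      ≤ ∫⁻ y, ENNReal.ofReal
          ((f xstar - f y) /
            (‖xstar - y‖ ^ 2 + (f xstar - f y) ^ 2) ^ ((3 + α) / 2)) := by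
  have hπ : (0:ℝ) < π := Real.pi_pos
  have hα0 : (0:ℝ) ≤ α := hα.1
  set p : ℝ := (3 + α) / 2 with hp
  have hp0 : 0 < p := by positivity
  have hMM₀ : M ≤ M₀ := hM ▸ hbdd xstar
  set S : ℝ := 1 + 2 * K / π + 4 * M₀ ^ 3 with hSdef
  have hSpos : 0 < S := by positivity
  -- radius
  set r : ℝ := Real.sqrt ((2 * K / π + 1) / M) with hrdef
  have hr2 : r ^ 2 = (2 * K / π + 1) / M := Real.sq_sqrt (by positivity)
  have hrpos : 0 < r := Real.sqrt_pos.mpr (by positivity)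
  set B := Metric.closedBall xstar r with hBdef
  set T : Set (EuclideanSpace ℝ (Fin 2)) := {y | M / 2 ≤ f xstar - f y} with hTdef
  set V : Set (EuclideanSpace ℝ (Fin 2)) := B ∩ T with hVdef
  have hVmeas : MeasurableSet V :=
    Metric.isClosed_closedBall.measurableSet.inter
      (measurableSet_le measurable_const (measurable_const.sub hmeas))
  -- volume of the ball
  have hvolB : volume B = ENNReal.ofReal ((2 * K + π) / M) := by
    rw [hBdef, EuclideanSpace.volume_closedBall]
    have hcard : Fintype.card (Fin 2) = 2 := by simp
    rw [hcard]
    norm_num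
    rw [← ENNReal.ofReal_pow hrpos.le, ← ENNReal.ofReal_pow (Real.sqrt_nonneg _), Real.sq_sqrt hπ.le, ← ENNReal.ofReal_mul (by positivity),
      hr2]
    congr 1
    field_simp
  -- Markov bound on the set where f is large
  have hmarkov : volume {y | M / 2 ≤ f y} ≤ ENNReal.ofReal (2 * K / M) := by
    have hsub : {y | M / 2 ≤ f y} ⊆ {y | ENNReal.ofReal (M / 2) ≤ ENNReal.ofReal (f y)} :=
      fun y hy => ENNReal.ofReal_le_ofReal hy
    have h1 : ENNReal.ofReal (M / 2) * volume {y | ENNReal.ofReal (M / 2) ≤ ENNReal.ofReal (f y)}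
        ≤ ∫⁻ y, ENNReal.ofReal (f y) :=
      mul_meas_ge_le_lintegral (ENNReal.measurable_ofReal.comp hmeas) _
    have h2 : (∫⁻ y, ENNReal.ofReal (f y)) = ENNReal.ofReal (∫ y, f y) :=
      (MeasureTheory.ofReal_integral_eq_lintegral_ofReal hint
        (Filter.Eventually.of_forall hnonneg)).symm
    have h3 : ENNReal.ofReal (M / 2) * volume {y | M / 2 ≤ f y} ≤ ENNReal.ofReal K :=
      le_trans (le_trans (mul_le_mul_right (measure_mono hsub) _) h1)
        (by rw [h2]; exact ENNReal.ofReal_le_ofReal hL1)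
    have hne : ENNReal.ofReal (M / 2) ≠ 0 :=
      ne_of_gt (ENNReal.ofReal_pos.mpr (by linarith))
    rw [mul_comm] at h3
    have := (ENNReal.le_div_iff_mul_le (Or.inl hne) (Or.inl ENNReal.ofReal_ne_top)).mpr h3
    refine this.trans ?_
    rw [← ENNReal.ofReal_div_of_pos (by linarith)]
    apply ENNReal.ofReal_le_ofReal
    apply le_of_eq
    field_simp
  -- lower bound on the measure of V
  have hVlb : ENNReal.ofReal (π / M) ≤ volume V := by
    have hcompl : B \ T ⊆ {y | M / 2 ≤ f y} := by
      intro y hy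
      have h1 : ¬ (M / 2 ≤ f xstar - f y) := hy.2
      have := hM
      simp only [Set.mem_setOf_eq]
      push_neg at h1
      linarith [hM ▸ h1]
    have hBle : volume B ≤ volume V + volume {y | M / 2 ≤ f y} :=
      (measure_le_inter_add_diff volume B T).trans
        (add_le_add le_rfl (measure_mono hcompl))
    have key : ENNReal.ofReal (π / M) + ENNReal.ofReal (2 * K / M)
        ≤ volume V + ENNReal.ofReal (2 * K / M) := by
      rw [← ENNReal.ofReal_add (by positivity) (by positivity)]
      have : π / M + 2 * K / M = (2 * K + π) / M := by field_simp; ring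
      rw [this, ← hvolB]
      exact hBle.trans (add_le_add le_rfl hmarkov)
    exact (ENNReal.add_le_add_iff_right ENNReal.ofReal_ne_top).mp key
  -- pointwise bound on V
  set c : ℝ := (M / 2) / (S / M) ^ p with hcdef
  have hSMpos : (0:ℝ) < S / M := by positivity
  have hpoint : ∀ y ∈ V, ENNReal.ofReal c ≤ ENNReal.ofReal
      ((f xstar - f y) / (‖xstar - y‖ ^ 2 + (f xstar - f y) ^ 2) ^ p) := by
    intro y hy
    apply ENNReal.ofReal_le_ofReal
    have hyB : dist y xstar ≤ r := Metric.mem_closedBall.mp hy.1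
    have hyT : M / 2 ≤ f xstar - f y := hy.2
    have hnum_le : f xstar - f y ≤ M := by
      have := hnonneg y; linarith [hM]
    have hnorm : ‖xstar - y‖ ≤ r := by
      rw [← dist_eq_norm, dist_comm]; exact hyB
    have hbase_le : ‖xstar - y‖ ^ 2 + (f xstar - f y) ^ 2 ≤ S / M := by
      have h1 : ‖xstar - y‖ ^ 2 ≤ r ^ 2 := by
        apply sq_le_sq' _ hnorm
        linarith [norm_nonneg (xstar - y)]
      have h2 : (f xstar - f y) ^ 2 ≤ 4 * M₀ ^ 3 / M := by
        rw [le_div_iff₀ hMpos]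
        have hnum0 : 0 ≤ f xstar - f y := by linarith
        have hnum2 : (f xstar - f y) ^ 2 ≤ M₀ ^ 2 :=
          pow_le_pow_left₀ hnum0 (by linarith) 2
        nlinarith [mul_le_mul hnum2 hMM₀ hMpos.le (by positivity : (0:ℝ) ≤ M₀ ^ 2)]
      have : r ^ 2 + 4 * M₀ ^ 3 / M = S / M := by
        rw [hr2, ← add_div, hSdef]; congr 1; ring
      linarith
    have hbase_pos : 0 < ‖xstar - y‖ ^ 2 + (f xstar - f y) ^ 2 := by
      have h0 : 0 < (f xstar - f y) ^ 2 := by nlinarith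
      have := sq_nonneg ‖xstar - y‖
      linarith
    have hpow_le : (‖xstar - y‖ ^ 2 + (f xstar - f y) ^ 2) ^ p ≤ (S / M) ^ p :=
      Real.rpow_le_rpow hbase_pos.le hbase_le hp0.le
    have hpow_pos : 0 < (‖xstar - y‖ ^ 2 + (f xstar - f y) ^ 2) ^ p :=
      Real.rpow_pos_of_pos hbase_pos _
    exact div_le_div₀ (by linarith) hyT hpow_pos hpow_le
  -- combine
  have hc_pos : 0 < c := by positivity
  calc ENNReal.ofReal ((π / 2) * M ^ p / S ^ p)
      = ENNReal.ofReal (c * (π / M)) := by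
        congr 1
        rw [hcdef, Real.div_rpow hSpos.le hMpos.le]
        have hMp : (0:ℝ) < M ^ p := Real.rpow_pos_of_pos hMpos _
        have hSp : (0:ℝ) < S ^ p := Real.rpow_pos_of_pos hSpos _
        field_simp
    _ = ENNReal.ofReal c * ENNReal.ofReal (π / M) := ENNReal.ofReal_mul hc_pos.le
    _ ≤ ENNReal.ofReal c * volume V := mul_le_mul_right hVlb _
    _ = ∫⁻ y in V, ENNReal.ofReal c := (setLIntegral_const V _).symm
    _ ≤ ∫⁻ y in V, ENNReal.ofReal
          ((f xstar - f y) / (‖xstar - y‖ ^ 2 + (f xstar - f y) ^ 2) ^ p) :=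
        setLIntegral_mono' hVmeas hpoint
    _ ≤ ∫⁻ y, ENNReal.ofReal
          ((f xstar - f y) / (‖xstar - y‖ ^ 2 + (f xstar - f y) ^ 2) ^ p) :=
        setLIntegral_le_lintegral _ _
end
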